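/- Let $x^n(R)$ be the unique optimal solution of QRAP-NC and suppose the nested constraint at index $j_p$ is tight with value $V_{j_p} \in \{L_{j_p}, U_{j_p}\}$, i.e., $\sum_{i \le j_p} x^n_i(R) = V_{j_p}$. Then the truncated vector $(x^n_1(R), \dots, x^n_{j_p}(R))$ is the unique optimal solution of the restricted subproblem QRAP-NC$^{j_p}(V_{j_p})$. -/

import Mathlib

lemma iic_castLE_map {n m : ℕ} (h : m ≤ n) (k : Fin m) :
    Finset.Iic (Fin.castLE h k) = (Finset.Iic k).map (Fin.castLEEmb h) := by
  ext i
  simp only [Finset.mem_Iic, Finset.mem_map, Fin.castLEEmb_apply]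
  constructor
  · intro hi
    refine ⟨⟨i, lt_of_le_of_lt ?_ k.isLt⟩, ?_, rfl⟩
    · exact hi
    · exact hi
  · rintro ⟨x, hx, rfl⟩
    exact hx

lemma sum_Iic_castLE {n m : ℕ} (h : m ≤ n) (f : Fin n → ℝ) (k : Fin m) :
    ∑ i ∈ Finset.Iic (Fin.castLE h k), f i = ∑ i ∈ Finset.Iic k, f (Fin.castLE h i) := by
  rw [iic_castLE_map h k, Finset.sum_map]
  rfl

lemma univ_eq_Iic_last (m : ℕ) : (Finset.univ : Finset (Fin (m+1))) = Finset.Iic (Fin.last m) := by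
  ext i; simp [Fin.le_last]

lemma iic_union_Ioc_fin {n : ℕ} {j k : Fin n} (h : j ≤ k) :
    Finset.Iic j ∪ Finset.Ioc j k = Finset.Iic k := by
  ext i
  simp only [Finset.mem_union, Finset.mem_Iic, Finset.mem_Ioc, Fin.le_def, Fin.lt_def] at *
  omega

def qrapncFeas (n : ℕ) (l u L U : Fin n → ℝ) (C : ℝ) (x : Fin n → ℝ) : Prop :=
  (∑ i, x i = C) ∧
  (∀ k : Fin n, (k : ℕ) + 1 < n →
    L k ≤ ∑ i ∈ Finset.Iic k, x i ∧ ∑ i ∈ Finset.Iic k, x i ≤ U k) ∧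
  (∀ i, l i ≤ x i ∧ x i ≤ u i)

noncomputable def qrapObj (n : ℕ) (a x : Fin n → ℝ) : ℝ := ∑ i, (1/2) * (x i)^2 / a i

def qrapncOpt (n : ℕ) (a l u L U : Fin n → ℝ) (C : ℝ) (x : Fin n → ℝ) : Prop :=
  qrapncFeas n l u L U C x ∧
  ∀ y, qrapncFeas n l u L U C y → qrapObj n a x ≤ qrapObj n a y

theorem stmt_19 (n : ℕ) (a l u L U : Fin n → ℝ) (R : ℝ)
    (ha : ∀ i, 0 < a i)
    (xstar : Fin n → ℝ)
    (hxstar : qrapncOpt n a l u L U R xstar)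
    (hxuniq : ∀ y, qrapncOpt n a l u L U R y → y = xstar)
    (j : Fin n) (hj : (j : ℕ) + 1 < n)
    (V : ℝ) (hV : V = L j ∨ V = U j)
    (htight : ∑ i ∈ Finset.Iic j, xstar i = V) :
    qrapncOpt ((j : ℕ) + 1)
      (fun i => a (Fin.castLE (by omega) i)) (fun i => l (Fin.castLE (by omega) i))
      (fun i => u (Fin.castLE (by omega) i)) (fun i => L (Fin.castLE (by omega) i))
      (fun i => U (Fin.castLE (by omega) i)) V
      (fun i => xstar (Fin.castLE (by omega) i)) ∧
    ∀ y : Fin ((j : ℕ) + 1) → ℝ,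
      qrapncOpt ((j : ℕ) + 1)
        (fun i => a (Fin.castLE (by omega) i)) (fun i => l (Fin.castLE (by omega) i))
        (fun i => u (Fin.castLE (by omega) i)) (fun i => L (Fin.castLE (by omega) i))
        (fun i => U (Fin.castLE (by omega) i)) V y →
      y = fun i => xstar (Fin.castLE (by omega) i) := by
  obtain ⟨hfeas, hopt⟩ := hxstar
  have h : (j : ℕ) + 1 ≤ n := by omega
  have hej : Fin.castLE h (Fin.last (j : ℕ)) = j := Fin.ext rfl
  have hsumuniv : ∀ f : Fin n → ℝ,
      ∑ i : Fin ((j : ℕ) + 1), f (Fin.castLE h i) = ∑ i ∈ Finset.Iic j, f i := by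
    intro f
    rw [univ_eq_Iic_last, ← sum_Iic_castLE h f (Fin.last (j : ℕ)), hej]
  have hLU := hfeas.2.1 j hj
  have hLV : L j ≤ V := htight ▸ hLU.1
  have hVU : V ≤ U j := htight ▸ hLU.2
  set e : Fin ((j : ℕ) + 1) → Fin n := Fin.castLE h with he
  have key : ∀ y : Fin ((j : ℕ) + 1) → ℝ,
      qrapncFeas ((j : ℕ) + 1) (fun i => l (e i)) (fun i => u (e i)) (fun i => L (e i))
        (fun i => U (e i)) V y →
      ∃ z : Fin n → ℝ, qrapncFeas n l u L U R z ∧ (∀ i : Fin ((j : ℕ) + 1), z (e i) = y i) ∧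
        qrapObj n a z = qrapObj ((j : ℕ) + 1) (fun i => a (e i)) y
          + ∑ i ∈ (Finset.Iic j)ᶜ, (1/2) * (xstar i)^2 / a i := by
    intro y hy
    set z : Fin n → ℝ := fun i => if h' : (i : ℕ) < (j : ℕ) + 1 then y ⟨i, h'⟩ else xstar i with hz
    have hze : ∀ i : Fin ((j : ℕ) + 1), z (e i) = y i := by
      intro i; simp only [hz, he]; exact dif_pos i.isLt
    -- prefix sums of z over Iic k for k : Fin (j+1)
    have hpre : ∀ k : Fin ((j : ℕ) + 1),
        ∑ i ∈ Finset.Iic (e k), z i = ∑ i ∈ Finset.Iic k, y i := by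
      intro k
      rw [he, sum_Iic_castLE h z k]
      exact Finset.sum_congr rfl fun i _ => hze i
    have hzj : ∑ i ∈ Finset.Iic j, z i = V := by
      rw [← hej, hpre, ← univ_eq_Iic_last]; exact hy.1
    have hcompl : ∀ i ∈ (Finset.Iic j)ᶜ, z i = xstar i := by
      intro i hi
      rw [Finset.mem_compl, Finset.mem_Iic, Fin.le_def, not_le] at hi
      simp only [hz]; exact dif_neg (by omega)
    have hxsum : ∑ i, xstar i = R := hfeas.1
    have hxcompl : ∑ i ∈ (Finset.Iic j)ᶜ, xstar i = R - V := by
      have := Finset.sum_add_sum_compl (Finset.Iic j) xstar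
      rw [htight, hxsum] at this; linarith
    refine ⟨z, ⟨?_, ?_, ?_⟩, hze, ?_⟩
    · -- total sum
      rw [← Finset.sum_add_sum_compl (Finset.Iic j) z, hzj,
        Finset.sum_congr rfl hcompl, hxcompl]; ring
    · -- nested constraints
      intro k hk
      rcases lt_trichotomy (k : ℕ) (j : ℕ) with hkj | hkj | hkj
      · have hk' : (k : ℕ) < (j : ℕ) + 1 := by omega
        have hek : e ⟨(k : ℕ), hk'⟩ = k := Fin.ext rfl
        have := hy.2.1 ⟨(k : ℕ), hk'⟩ (by simpa using hkj)
        rw [← hek, hpre]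
        simpa [hek] using this
      · have hkj' : k = j := Fin.ext hkj
        subst hkj'
        rw [hzj]
        exact ⟨hLV, hVU⟩
      · -- k > j : prefix sum of z equals that of xstar
        have hjk : j ≤ k := le_of_lt (by exact Fin.lt_def.mpr hkj)
        have hsplitk : ∀ f : Fin n → ℝ,
            ∑ i ∈ Finset.Iic k, f i = ∑ i ∈ Finset.Iic j, f i + ∑ i ∈ Finset.Ioc j k, f i := by
          intro f
          rw [← iic_union_Ioc_fin hjk, Finset.sum_union]
          simp [Finset.disjoint_left, Finset.mem_Iic, Finset.mem_Ioc]
          intro i h1 h2; exact absurd h1 (not_le.mpr h2)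
        have hioc : ∑ i ∈ Finset.Ioc j k, z i = ∑ i ∈ Finset.Ioc j k, xstar i := by
          apply Finset.sum_congr rfl
          intro i hi
          rw [Finset.mem_Ioc, Fin.lt_def] at hi
          simp only [hz]; exact dif_neg (by have := hi.1; omega)
        rw [hsplitk, hzj, hioc, ← htight, ← hsplitk]
        exact hfeas.2.1 k hk
    · -- box
      intro i
      by_cases h' : (i : ℕ) < (j : ℕ) + 1
      · have hei : e ⟨(i : ℕ), h'⟩ = i := Fin.ext rfl
        have := hy.2.2 ⟨(i : ℕ), h'⟩
        simp only [hei] at this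
        simp only [hz, dif_pos h']; exact this
      · simp only [hz, dif_neg h']; exact hfeas.2.2 i
    · -- objective decomposition
      unfold qrapObj
      rw [← Finset.sum_add_sum_compl (Finset.Iic j), ← hsumuniv (fun i => (1/2) * (z i)^2 / a i)]
      congr 1
      · exact Finset.sum_congr rfl fun i _ => by simp [hze i]
      · exact Finset.sum_congr rfl fun i hi => by rw [hcompl i hi]
  set T : ℝ := ∑ i ∈ (Finset.Iic j)ᶜ, (1/2) * (xstar i)^2 / a i with hT
  have hdecomp : qrapObj n a xstar
      = qrapObj ((j : ℕ) + 1) (fun i => a (e i)) (fun i => xstar (e i)) + T := by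
    unfold qrapObj
    rw [← Finset.sum_add_sum_compl (Finset.Iic j) (fun i => (1/2) * (xstar i)^2 / a i),
      ← hsumuniv (fun i => (1/2) * (xstar i)^2 / a i), hT]
  have hpfeas : qrapncFeas ((j : ℕ) + 1) (fun i => l (e i)) (fun i => u (e i))
      (fun i => L (e i)) (fun i => U (e i)) V (fun i => xstar (e i)) := by
    refine ⟨by rw [hsumuniv]; exact htight, ?_, fun i => hfeas.2.2 (e i)⟩
    intro k hk
    have hk2 : ((e k : Fin n) : ℕ) + 1 < n := by
      simp only [he, Fin.castLE]; omega
    have := hfeas.2.1 (e k) hk2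
    rw [he, sum_Iic_castLE h xstar k] at this
    exact this
  have hpopt : ∀ y, qrapncFeas ((j : ℕ) + 1) (fun i => l (e i)) (fun i => u (e i))
      (fun i => L (e i)) (fun i => U (e i)) V y →
      qrapObj ((j : ℕ) + 1) (fun i => a (e i)) (fun i => xstar (e i))
        ≤ qrapObj ((j : ℕ) + 1) (fun i => a (e i)) y := by
    intro y hy
    obtain ⟨z, hzf, hze, hzobj⟩ := key y hy
    have := hopt z hzf
    rw [hzobj, hdecomp] at this
    linarith
  refine ⟨⟨hpfeas, hpopt⟩, ?_⟩
  intro y hy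
  obtain ⟨hyf, hyopt⟩ := hy
  obtain ⟨z, hzf, hze, hzobj⟩ := key y hyf
  have h1 : qrapObj ((j : ℕ) + 1) (fun i => a (e i)) y
      ≤ qrapObj ((j : ℕ) + 1) (fun i => a (e i)) (fun i => xstar (e i)) := hyopt _ hpfeas
  have hzopt : qrapncOpt n a l u L U R z := by
    refine ⟨hzf, fun w hw => ?_⟩
    have h2 := hopt w hw
    rw [hzobj, hdecomp] at *
    linarith
  have hzx : z = xstar := hxuniq z hzopt
  funext i
  rw [← hze i, hzx]
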